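/- Let k > 0, A > 0, C > 0, c > 0. Then there exist constants M > 0 and c' > c such that for all ξ > 0: Σ_{ℓ=1}^∞ A C^ℓ ξ^{ℓ-k} e^{c ξ^k} / Γ(ℓ/k) ≤ M ξ^{1-k} e^{c' ξ^k}. -/

import Mathlib

open Real

lemma gammaMono : ∀ ⦃x y : ℝ⦄, 2 ≤ x → x ≤ y → Real.Gamma x ≤ Real.Gamma y := by
  intro x y hx hxy
  rcases eq_or_lt_of_le hxy with h | h
  · rw [h]
  · exact (Real.Gamma_strictMonoOn_Ici hx (hx.trans hxy) h).le

lemma gammaLB {s : ℝ} (hs : 0 < s) : 1/6 ≤ Real.Gamma s := by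
  rcases le_or_gt 2 s with h | h
  · have := gammaMono le_rfl h
    rw [Real.Gamma_two] at this; linarith
  · have h1 : Real.Gamma (s + 2) = (s+1) * (s * Real.Gamma s) := by
      have e1 : (s : ℝ) + 2 = (s + 1) + 1 := by ring
      rw [e1, Real.Gamma_add_one (by linarith), Real.Gamma_add_one hs.ne']
    have h2 : (1:ℝ) ≤ Real.Gamma (s + 2) := by
      have := gammaMono le_rfl (by linarith : (2:ℝ) ≤ s + 2)
      rw [Real.Gamma_two] at this; linarith
    have hg := Real.Gamma_pos_of_pos hs
    have h3 : (s+1)*s ≤ 6 := by nlinarith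
    nlinarith [mul_le_mul_of_nonneg_right h3 hg.le]

set_option maxHeartbeats 1000000 in
lemma key (k : ℝ) (hk : 0 < k) (ℓ : ℕ) (x : ℝ) (hx : 0 < x) :
    x ^ ℓ ≤ (6 * exp (2/k)) * Real.Gamma (((ℓ:ℝ) + 1)/k) * exp (exp 2 * x ^ k) := by
  set s : ℝ := ((ℓ:ℝ) + 1)/k with hs_def
  clear_value s
  have hs : 0 < s := by rw [hs_def]; positivity
  have hg := Real.Gamma_pos_of_pos hs
  have hgl := gammaLB hs
  have hE1 : (1:ℝ) ≤ exp (exp 2 * x ^ k) := one_le_exp (by positivity)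
  have hK1 : (1:ℝ) ≤ exp (2/k) := one_le_exp (by positivity)
  rcases le_or_gt x 1 with hx1 | hx1
  · have h1 : x ^ ℓ ≤ 1 := pow_le_one₀ hx.le hx1
    nlinarith [mul_le_mul_of_nonneg_left hE1 (by positivity : (0:ℝ) ≤ 6 * exp (2/k) * Real.Gamma s)]
  · set n : ℕ := ⌈(ℓ:ℝ)/k⌉₊ with hn_def
    set E : ℝ := exp (exp 2 * x ^ k) with hE_def
    have hn1 : (ℓ:ℝ)/k ≤ n := Nat.le_ceil _
    have hn2 : (n:ℝ) ≤ (ℓ:ℝ)/k + 1 := (Nat.ceil_lt_add_one (by positivity)).le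
    clear_value n E
    have hln : (ℓ:ℝ) ≤ k * n := by
      rw [div_le_iff₀ hk] at hn1; linarith [hn1]
    -- step4 : n! ≤ 6 * exp(2/k) * Γ s * exp (2*n)
    have step4 : (n.factorial : ℝ) ≤ 6 * exp (2/k) * Real.Gamma s * exp (2*(n:ℝ)) := by
      rcases Nat.eq_zero_or_pos n with h0 | hpos
      · rw [h0]; norm_num [Real.exp_zero]
        nlinarith [mul_le_mul_of_nonneg_left hgl (by positivity : (0:ℝ) ≤ 6 * exp (2/k))]
      · have hlks : (ℓ:ℝ)/k ≤ s := by
          rw [hs_def]; gcongr; linarith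
        have hsn : s ≤ (n:ℝ) + 1/k := by
          rw [hs_def, add_div]; exact add_le_add_left hn1 _
        have hns : (n:ℝ) + 1 ≤ s + 2 := by linarith
        have h2n : (2:ℝ) ≤ (n:ℝ) + 1 := by exact_mod_cast Nat.succ_le_succ hpos
        have hfac : (n.factorial : ℝ) = Real.Gamma ((n:ℝ) + 1) :=
          (Real.Gamma_nat_eq_factorial n).symm
        have hm : Real.Gamma ((n:ℝ) + 1) ≤ Real.Gamma (s + 2) := gammaMono h2n hns
        have hG2 : Real.Gamma (s + 2) = (s + 1) * (s * Real.Gamma s) := by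
          have e1 : s + 2 = (s + 1) + 1 := by ring
          rw [e1, Real.Gamma_add_one (by linarith), Real.Gamma_add_one hs.ne']
        have hse : s + 1 ≤ exp s := add_one_le_exp s
        have hse2 : s ≤ exp s := by linarith
        have hprod : (s + 1) * (s * Real.Gamma s) ≤ exp s * exp s * Real.Gamma s := by
          nlinarith [mul_le_mul hse (mul_le_mul_of_nonneg_right hse2 hg.le)
            (by positivity) (exp_pos s).le]
        have hexp2s : exp s * exp s = exp (2*s) := by rw [← exp_add]; ring_nf
        have hmono : exp (2*s) ≤ exp (2/k) * exp (2*(n:ℝ)) := by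
          rw [← exp_add]
          refine exp_le_exp.mpr ?_
          have e : (2:ℝ)/k = 2*(1/k) := by ring
          rw [e]; linarith
        have := mul_le_mul_of_nonneg_right hmono hg.le
        rw [hfac]
        calc Real.Gamma ((n:ℝ)+1) ≤ Real.Gamma (s+2) := hm
          _ ≤ exp (2*s) * Real.Gamma s := by rw [hG2]; nlinarith [hg]
          _ ≤ (exp (2/k) * exp (2*(n:ℝ))) * Real.Gamma s := by
              exact mul_le_mul_of_nonneg_right hmono hg.le
          _ ≤ 6 * exp (2/k) * Real.Gamma s * exp (2*(n:ℝ)) := by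
              linarith [mul_pos (mul_pos (exp_pos (2/k)) (exp_pos (2*(n:ℝ)))) hg]
    -- term bound from exp series
    have hterm : (exp 2 * x ^ k) ^ n / n.factorial ≤ E := by
      have hsum := Real.sum_le_exp_of_nonneg (by positivity : (0:ℝ) ≤ exp 2 * x ^ k) (n+1)
      have hsingle := Finset.single_le_sum
        (f := fun i => (exp 2 * x ^ k) ^ i / i.factorial)
        (fun i _ => by positivity) (Finset.self_mem_range_succ n)
      rw [hE_def]; simpa using hsingle.trans hsum
    have hfac_pos : (0:ℝ) < n.factorial := by exact_mod_cast n.factorial_pos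
    have hterm' : (exp 2 * x ^ k) ^ n ≤ (n.factorial : ℝ) * E := by
      rw [div_le_iff₀ hfac_pos] at hterm; linarith [hterm]
    -- chain
    have hxk : x ^ (ℓ:ℝ) ≤ x ^ (k * (n:ℝ)) :=
      rpow_le_rpow_of_exponent_le hx1.le hln
    have hxl : x ^ ℓ ≤ (x ^ k) ^ n := by
      have e1 : x ^ (k * (n:ℝ)) = (x ^ k) ^ n := by
        rw [rpow_mul hx.le, rpow_natCast]
      have e2 : x ^ (ℓ:ℝ) = x ^ ℓ := rpow_natCast x ℓ
      rw [← e2, ← e1]; exact hxk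
    have hexpn : (0:ℝ) < exp (2*(n:ℝ)) := exp_pos _
    have hE0 : (0:ℝ) ≤ E := by linarith
    have hen : exp 2 ^ n = exp (2*(n:ℝ)) := by rw [← exp_nat_mul, mul_comm]
    have h1 : (x ^ k) ^ n * exp (2*(n:ℝ)) = (exp 2 * x ^ k) ^ n := by
      rw [mul_pow, hen]; ring
    have h3 : (n.factorial : ℝ) * E ≤ (6 * exp (2/k) * Real.Gamma s * E) * exp (2*(n:ℝ)) := by
      have := mul_le_mul_of_nonneg_right step4 hE0
      nlinarith [this]
    have h4 : (x ^ k) ^ n * exp (2*(n:ℝ)) ≤ (6 * exp (2/k) * Real.Gamma s * E) * exp (2*(n:ℝ)) := by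
      rw [h1]; exact hterm'.trans h3
    have hmain : (x ^ k) ^ n ≤ 6 * exp (2/k) * Real.Gamma s * E :=
      le_of_mul_le_mul_right h4 hexpn
    exact hxl.trans hmain

theorem stmt_15 (k A C c : ℝ) (hk : 0 < k) (hA : 0 < A) (hC : 0 < C) (hc : 0 < c) :
    ∃ M > (0:ℝ), ∃ c' > c, ∀ ξ > (0:ℝ),
      (∑' ℓ : ℕ, A * C ^ (ℓ + 1) * ξ ^ ((ℓ + 1 : ℝ) - k) * exp (c * ξ ^ k) /
          Gamma ((ℓ + 1 : ℝ) / k))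
        ≤ M * ξ ^ (1 - k) * exp (c' * ξ ^ k) := by
  set K : ℝ := 6 * exp (2/k) with hK_def
  have hK : 0 < K := by positivity
  set β : ℝ := exp 2 * (2*C) ^ k with hβ_def
  have hβ : 0 < β := by
    have := rpow_pos_of_pos (by linarith : (0:ℝ) < 2*C) k
    positivity
  refine ⟨2*A*C*K, by positivity, c + β, by linarith, ?_⟩
  intro ξ hξ
  set t : ℕ → ℝ := fun ℓ => A * C ^ (ℓ + 1) * ξ ^ ((ℓ + 1 : ℝ) - k) * exp (c * ξ ^ k) /
          Gamma ((ℓ + 1 : ℝ) / k) with ht_def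
  set R : ℝ := A*C*ξ^(1-k)*exp (c*ξ^k)*(K * exp (β*ξ^k)) with hR_def
  have hR : 0 < R := by
    have := rpow_pos_of_pos hξ (1-k)
    positivity
  have hbound : ∀ ℓ : ℕ, t ℓ ≤ R * (1/2)^ℓ := by
    intro ℓ
    have hs : 0 < ((ℓ:ℝ) + 1)/k := by positivity
    have hgpos := Real.Gamma_pos_of_pos hs
    have hx : (0:ℝ) < 2*C*ξ := by positivity
    have hkey := key k hk ℓ (2*C*ξ) hx
    have hxk : (2*C*ξ) ^ k = (2*C)^k * ξ^k := mul_rpow (by positivity) hξ.le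
    have hexp : exp (exp 2 * (2*C*ξ) ^ k) = exp (β * ξ^k) := by
      rw [hxk, hβ_def]; ring_nf
    rw [hexp] at hkey
    rw [ht_def]
    simp only []
    rw [div_le_iff₀ hgpos]
    have hxi : ξ ^ (((ℓ:ℝ) + 1) - k) = ξ^ℓ * ξ^(1-k) := by
      have e : ((ℓ:ℝ) + 1) - k = (ℓ:ℝ) + (1 - k) := by ring
      rw [e, rpow_add hξ, rpow_natCast]
    have hhalf : ((1:ℝ)/2)^ℓ * (2*C*ξ)^ℓ = C^ℓ * ξ^ℓ := by
      rw [← mul_pow, ← mul_pow]; congr 1; ring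
    have hP : (0:ℝ) ≤ A*C*ξ^(1-k)*exp (c*ξ^k)*((1:ℝ)/2)^ℓ := by
      have := rpow_pos_of_pos hξ (1-k)
      positivity
    have hmul := mul_le_mul_of_nonneg_left hkey hP
    calc A * C ^ (ℓ + 1) * ξ ^ (((ℓ:ℝ) + 1) - k) * exp (c * ξ ^ k)
        = (A*C*ξ^(1-k)*exp (c*ξ^k)*((1:ℝ)/2)^ℓ) * (2*C*ξ)^ℓ := by
          rw [hxi, pow_succ]
          rw [show A * (C ^ ℓ * C) * (ξ^ℓ * ξ^(1-k)) * exp (c * ξ ^ k)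
            = A*C*ξ^(1-k)*exp (c*ξ^k)*(C^ℓ * ξ^ℓ) from by ring, ← hhalf]
          ring
      _ ≤ (A*C*ξ^(1-k)*exp (c*ξ^k)*((1:ℝ)/2)^ℓ) *
            (K * Real.Gamma (((ℓ:ℝ) + 1)/k) * exp (β * ξ^k)) := hmul
      _ = R * (1/2)^ℓ * Real.Gamma (((ℓ:ℝ) + 1)/k) := by rw [hR_def]; ring
  have hnonneg : ∀ ℓ : ℕ, 0 ≤ t ℓ := by
    intro ℓ
    have hs : 0 < ((ℓ:ℝ) + 1)/k := by positivity
    have hgpos := Real.Gamma_pos_of_pos hs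
    rw [ht_def]
    have := rpow_pos_of_pos hξ (((ℓ:ℝ) + 1) - k)
    positivity
  have hg : Summable (fun ℓ : ℕ => R * (1/2)^ℓ) :=
    (summable_geometric_two).mul_left R
  have hts : Summable t := Summable.of_nonneg_of_le hnonneg hbound hg
  have hle : (∑' ℓ, t ℓ) ≤ ∑' ℓ : ℕ, R * (1/2)^ℓ := Summable.tsum_le_tsum hbound hts hg
  have hgsum : (∑' ℓ : ℕ, R * (1/2)^ℓ) = R * 2 := by
    rw [tsum_mul_left, tsum_geometric_two]
  have hfin : R * 2 = 2*A*C*K * ξ^(1-k) * exp ((c+β) * ξ^k) := by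
    rw [hR_def, show (c+β) * ξ^k = c*ξ^k + β*ξ^k from by ring, exp_add]; ring
  calc (∑' ℓ, t ℓ) ≤ R * 2 := by rw [← hgsum]; exact hle
    _ = 2*A*C*K * ξ^(1-k) * exp ((c+β) * ξ^k) := hfin
    _ ≤ 2*A*C*K * ξ^(1-k) * exp ((c+β) * ξ^k) := le_refl _
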